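/- Let (T,(P_t)) be a tree-decomposition of a finite set E, and let P and Q be two tangles each orienting all edge-separations of T. If the subtrees S(P) and S(Q) intersect, then no separation corresponding to an edge of T distinguishes P and Q. -/

import Mathlib

variable {E : Type*}

/-- `f` is symmetric: `f X = f (E \ X)` for all `X ⊆ E`. -/
def FSymm (f : Set E → ℤ) : Prop := ∀ X : Set E, f X = f Xᶜ

/-- `f` is submodular. -/
def FSubmod (f : Set E → ℤ) : Prop :=
  ∀ X Y : Set E, f (X ∩ Y) + f (X ∪ Y) ≤ f X + f Y

/-- Separations `(A,B)` and `(C,D)` are nested: some side of the first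
is contained in some side of the second. -/
def Nested (A B C D : Set E) : Prop := A ⊆ C ∨ A ⊆ D ∨ B ⊆ C ∨ B ⊆ D

/-- `T` is a tangle of order `k+1`: a set of small sides of separations of
order at most `k`, orienting every separation of order at most `k`, such that
no three small sides cover `E` and the complement of a singleton is never small. -/
def IsTangle (f : Set E → ℤ) (k : ℤ) (T : Set (Set E)) : Prop :=
  (∀ A ∈ T, f A ≤ k) ∧
  (∀ A : Set E, f A ≤ k → A ∈ T ∨ Aᶜ ∈ T) ∧
  (∀ A₁ ∈ T, ∀ A₂ ∈ T, ∀ A₃ ∈ T, A₁ ∪ A₂ ∪ A₃ ≠ Set.univ) ∧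
  (∀ e : E, ({e}ᶜ : Set E) ∉ T)

/-- A tangle is maximal if it is not included in any other tangle. -/
def IsMaximalTangle (f : Set E → ℤ) (T : Set (Set E)) : Prop :=
  (∃ k, IsTangle f k T) ∧
  ∀ T' : Set (Set E), (∃ k, IsTangle f k T') → T ⊆ T' → T' = T

/-- The separation with sides `A`, `Aᶜ` distinguishes the tangles `P` and `Q`. -/
def Distinguishes (A : Set E) (P Q : Set (Set E)) : Prop :=
  (A ∈ P ∧ Aᶜ ∈ Q) ∨ (Aᶜ ∈ P ∧ A ∈ Q)

/-- The separation with sides `A`, `Aᶜ` distinguishes `P` and `Q` efficiently. -/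
def DistinguishesEff (f : Set E → ℤ) (A : Set E) (P Q : Set (Set E)) : Prop :=
  Distinguishes A P Q ∧ ∀ C : Set E, Distinguishes C P Q → f A ≤ f C

variable {V : Type*}

/-- `P` is a partition of `E` into (possibly empty) classes indexed by `V`. -/
def IsPartitionFam (P : V → Set E) : Prop :=
  (∀ x y : V, x ≠ y → Disjoint (P x) (P y)) ∧ (⋃ x, P x) = Set.univ

/-- For an edge `tu` of the decomposition tree `G`, the side `S_t` of the
corresponding separation: the union of the parts over the component of
`G - tu` containing `t`. -/
def treeSide (G : SimpleGraph V) (P : V → Set E) (t u : V) : Set E :=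
  ⋃ x ∈ {x | (G.deleteEdges {s(t, u)}).Reachable t x}, P x

/-- A tangle `Q` lives in a nonempty subgraph `S` of the decomposition tree if
for every vertex `t` of `S` and every edge `tu` incident with `t` but not in
`S`, `Q` orients the corresponding separation towards the `t`-side, i.e. the
`u`-side is small in `Q`. -/
def LivesIn (G : SimpleGraph V) (P : V → Set E) (Q : Set (Set E))
    (S : G.Subgraph) : Prop :=
  S.verts.Nonempty ∧
    ∀ t ∈ S.verts, ∀ u : V, G.Adj t u → ¬ S.Adj t u → treeSide G P u t ∈ Q


section Aux

variable (G : SimpleGraph V)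

lemma bridge_lem (hG : G.IsTree) {t u : V} (h : G.Adj t u) :
    ¬ (G.deleteEdges {s(t,u)}).Reachable t u := by
  have hb := (SimpleGraph.isAcyclic_iff_forall_adj_isBridge.mp hG.IsAcyclic) h
  rw [SimpleGraph.isBridge_iff] at hb
  exact hb

lemma cover_aux {t u : V} :
    ∀ {a x : V} (_ : G.Walk a x),
      ((G.deleteEdges {s(t,u)}).Reachable t a ∨ (G.deleteEdges {s(t,u)}).Reachable u a) →
      ((G.deleteEdges {s(t,u)}).Reachable t x ∨ (G.deleteEdges {s(t,u)}).Reachable u x) := by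
  intro a x w
  induction w with
  | nil => exact id
  | @cons a b c hab p ih =>
    intro hs
    apply ih
    by_cases he : s(a,b) = s(t,u)
    · rw [Sym2.eq_iff] at he
      rcases he with ⟨rfl, rfl⟩ | ⟨rfl, rfl⟩
      · exact Or.inr SimpleGraph.Reachable.rfl
      · exact Or.inl SimpleGraph.Reachable.rfl
    · have hadj : (G.deleteEdges {s(t,u)}).Adj a b := by
        rw [SimpleGraph.deleteEdges_adj]
        exact ⟨hab, by simpa using he⟩
      rcases hs with h | h
      · exact Or.inl (h.trans hadj.reachable)
      · exact Or.inr (h.trans hadj.reachable)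

lemma cover_lem (hG : G.IsTree) (t u x : V) :
    (G.deleteEdges {s(t,u)}).Reachable t x ∨ (G.deleteEdges {s(t,u)}).Reachable u x := by
  obtain ⟨w⟩ := hG.isConnected.preconnected t x
  exact cover_aux G w (Or.inl SimpleGraph.Reachable.rfl)

lemma treeSide_compl (hG : G.IsTree) (Pa : V → Set E)
    (hPa : IsPartitionFam Pa) {t u : V} (h : G.Adj t u) :
    treeSide G Pa u t = (treeSide G Pa t u)ᶜ := by
  have hswap : s(u,t) = s(t,u) := Sym2.eq_swap
  ext e
  simp only [treeSide, Set.mem_iUnion, Set.mem_setOf_eq, Set.mem_compl_iff, hswap]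
  constructor
  · rintro ⟨x, hx, hex⟩ ⟨y, hy, hey⟩
    by_cases hxy : x = y
    · subst hxy
      exact bridge_lem G hG h (hy.trans hx.symm)
    · exact Set.disjoint_left.mp (hPa.1 x y hxy) hex hey
  · intro hne
    have : e ∈ ⋃ x, Pa x := hPa.2 ▸ Set.mem_univ e
    obtain ⟨x, hex⟩ := Set.mem_iUnion.mp this
    rcases cover_lem G hG t u x with hx | hx
    · exact absurd ⟨x, hx, hex⟩ hne
    · exact ⟨x, hx, hex⟩

/-- The component of `t` in `G - tu`, as a subgraph of `G`. -/
def compSub (t u : V) : G.Subgraph where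
  verts := {x | (G.deleteEdges {s(t,u)}).Reachable t x}
  Adj a b := G.Adj a b ∧ (G.deleteEdges {s(t,u)}).Reachable t a ∧
    (G.deleteEdges {s(t,u)}).Reachable t b
  adj_sub h := h.1
  edge_vert h := h.2.1
  symm := ⟨fun a b h => ⟨h.1.symm, h.2.2, h.2.1⟩⟩

lemma lives_comp (hG : G.IsTree) (Pa : V → Set E)
    (Q : Set (Set E)) {t u : V} (h : G.Adj t u)
    (hQ : treeSide G Pa u t ∈ Q) :
    LivesIn G Pa Q (compSub G t u) := by
  refine ⟨⟨t, SimpleGraph.Reachable.rfl⟩, ?_⟩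
  intro s hs v hadj hnadj
  have hs' : (G.deleteEdges {s(t,u)}).Reachable t s := hs
  have hv : ¬ (G.deleteEdges {s(t,u)}).Reachable t v := fun hv => hnadj ⟨hadj, hs', hv⟩
  have he : s(s,v) = s(t,u) := by
    by_contra he
    have hadj' : (G.deleteEdges {s(t,u)}).Adj s v := by
      rw [SimpleGraph.deleteEdges_adj]
      exact ⟨hadj, by simpa using he⟩
    exact hv (hs'.trans hadj'.reachable)
  rw [Sym2.eq_iff] at he
  rcases he with ⟨rfl, rfl⟩ | ⟨rfl, rfl⟩
  · exact hQ
  · exact absurd hs' (bridge_lem G hG h)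

end Aux

/-- If the smallest subtrees in which two tangles live intersect, then no
separation corresponding to an edge of the decomposition tree distinguishes
the two tangles. -/
theorem stmt_17 [Fintype E] [Fintype V] (f : Set E → ℤ)
    (hsym : FSymm f) (hsub : FSubmod f)
    (G : SimpleGraph V) (hG : G.IsTree) (Pa : V → Set E)
    (hPa : IsPartitionFam Pa)
    (P Q : Set (Set E)) (hP : ∃ k, IsTangle f k P) (hQ : ∃ k, IsTangle f k Q)
    (horP : ∀ t u : V, G.Adj t u →
      treeSide G Pa t u ∈ P ∨ treeSide G Pa u t ∈ P)
    (horQ : ∀ t u : V, G.Adj t u →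
      treeSide G Pa t u ∈ Q ∨ treeSide G Pa u t ∈ Q)
    (hmeet : ((sInf {S : G.Subgraph | LivesIn G Pa P S}).verts ∩
      (sInf {S : G.Subgraph | LivesIn G Pa Q S}).verts).Nonempty) :
    ∀ t u : V, G.Adj t u → ¬ Distinguishes (treeSide G Pa t u) P Q := by
  intro t u hadj hdist
  obtain ⟨w, hwP, hwQ⟩ := hmeet
  have hcompl := treeSide_compl G hG Pa hPa hadj
  have key : ∀ (R₁ R₂ : Set (Set E)), treeSide G Pa t u ∈ R₁ →
      (treeSide G Pa t u)ᶜ ∈ R₂ →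
      w ∈ (sInf {S : G.Subgraph | LivesIn G Pa R₁ S}).verts →
      w ∈ (sInf {S : G.Subgraph | LivesIn G Pa R₂ S}).verts → False := by
    intro R₁ R₂ h1 h2 hw1 hw2
    have hl1 : LivesIn G Pa R₁ (compSub G u t) :=
      lives_comp G hG Pa R₁ hadj.symm h1
    have hl2 : LivesIn G Pa R₂ (compSub G t u) :=
      lives_comp G hG Pa R₂ hadj (hcompl ▸ h2)
    have hle1 : sInf {S : G.Subgraph | LivesIn G Pa R₁ S} ≤ compSub G u t := sInf_le hl1
    have hle2 : sInf {S : G.Subgraph | LivesIn G Pa R₂ S} ≤ compSub G t u := sInf_le hl2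
    have hw1' : (G.deleteEdges {s(u,t)}).Reachable u w :=
      SimpleGraph.Subgraph.verts_mono hle1 hw1
    have hw2' : (G.deleteEdges {s(t,u)}).Reachable t w :=
      SimpleGraph.Subgraph.verts_mono hle2 hw2
    rw [Sym2.eq_swap] at hw1'
    exact bridge_lem G hG hadj (hw2'.trans hw1'.symm)
  rcases hdist with ⟨h1, h2⟩ | ⟨h2, h1⟩
  · exact key P Q h1 h2 hwP hwQ
  · exact key Q P h1 h2 hwQ hwP
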